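/- Let (X, π) be a finite symmetric two-player game with relative payoff game (X, Δ). If (X, Δ) is a generalized ordinal potential game, i.e., there exists P : X × X → ℝ such that for all y ∈ X and all x, x' ∈ X, Δ(x, y) − Δ(x', y) > 0 implies P(x, y) − P(x', y) > 0 and Δ(x, y) − Δ(x', y) > 0 implies P(y, x) − P(y, x') > 0, then imitation is not subject to a money pump. -/
import Mathlib


/-- The imitator's action sequence: `y₀` initially; imitate the opponent's previous
action iff it earned a strictly positive relative payoff. -/
noncomputable def imitSeq {X : Type*} (Δ : X → X → ℝ) (x : ℕ → X) (y0 : X) : ℕ → X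
  | 0 => y0
  | t + 1 => if 0 < Δ (x t) (imitSeq Δ x y0 t) then x t else imitSeq Δ x y0 t

/-- Imitation is not subject to a money pump: there is a uniform bound `M` on the sum
of the opponent's relative payoffs, for every initial action of the imitator, every
opponent sequence, and every horizon. -/
def NoMoneyPump {X : Type*} (Δ : X → X → ℝ) : Prop :=
  ∃ M : ℝ, ∀ (y0 : X) (x : ℕ → X) (T : ℕ),
    ∑ t ∈ Finset.range (T + 1), Δ (x t) (imitSeq Δ x y0 t) ≤ M

theorem stmt12 {X : Type*} [Fintype X] [Nonempty X]
    (π : X → X → ℝ) (Δ : X → X → ℝ) (hΔ : ∀ x y, Δ x y = π x y - π y x)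
    (P : X → X → ℝ)
    (hP : ∀ y x x' : X, (0 < Δ x y - Δ x' y → 0 < P x y - P x' y) ∧
      (0 < Δ x y - Δ x' y → 0 < P y x - P y x')) :
    NoMoneyPump Δ := by
  classical
  have hzero : ∀ z : X, Δ z z = 0 := fun z => by rw [hΔ]; ring
  have hanti : ∀ a b : X, Δ a b = - Δ b a := fun a b => by rw [hΔ, hΔ]; ring
  -- diagonal potential strictly increases on imitation
  have key : ∀ a b : X, 0 < Δ a b → P b b < P a a := by
    intro a b h
    have h1 : P b b < P b a := by
      have hc : 0 < Δ a b - Δ b b := by rw [hzero]; linarith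
      have := (hP b a b).2 hc
      linarith
    have h2 : P b a < P a a := by
      have hc : 0 < Δ a a - Δ b a := by
        rw [hzero, hanti b a]; linarith
      have := (hP a a b).1 hc
      linarith
    linarith
  -- a maximum of Δ
  obtain ⟨p, -, hp⟩ := Finset.exists_max_image (Finset.univ : Finset (X × X))
    (fun q => Δ q.1 q.2) Finset.univ_nonempty
  set C := Δ p.1 p.2 with hC
  have hCle : ∀ a b : X, Δ a b ≤ C := fun a b => hp (a, b) (Finset.mem_univ _)
  have hC0 : 0 ≤ C := by
    obtain ⟨z⟩ := ‹Nonempty X›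
    have := hCle z z
    rw [hzero z] at this
    exact this
  refine ⟨(Fintype.card X : ℝ) * C, ?_⟩
  intro y0 x T
  set y : ℕ → X := imitSeq Δ x y0 with hy
  have hstep : ∀ n : ℕ, y (n + 1) = if 0 < Δ (x n) (y n) then x n else y n := fun n => rfl
  have hQstep : ∀ n : ℕ, P (y n) (y n) ≤ P (y (n + 1)) (y (n + 1)) := by
    intro n
    rw [hstep n]
    by_cases hd : 0 < Δ (x n) (y n)
    · simp only [if_pos hd]
      exact le_of_lt (key _ _ hd)
    · simp only [if_neg hd]
      exact le_rfl
  have hmono : ∀ s t : ℕ, s ≤ t → P (y s) (y s) ≤ P (y t) (y t) := by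
    intro s t hst
    induction t with
    | zero => simp [Nat.le_zero.mp hst]
    | succ n ih =>
      rcases Nat.lt_or_ge s (n + 1) with h | h
      · exact le_trans (ih (Nat.lt_succ_iff.mp h)) (hQstep n)
      · have : s = n + 1 := le_antisymm hst h
        simp [this]
  set S := (Finset.range (T + 1)).filter (fun t => 0 < Δ (x t) (y t)) with hS
  have hcardS : S.card ≤ Fintype.card X := by
    have hinj : Set.InjOn (fun t => y (t + 1)) S := by
      intro s hs t ht heq
      by_contra hne
      rcases lt_or_gt_of_ne hne with hlt | hlt
      all_goals {
        first
        | (have hs' : 0 < Δ (x t) (y t) := (Finset.mem_filter.mp ht).2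
           have h1 : P (y (s+1)) (y (s+1)) ≤ P (y t) (y t) := hmono _ _ hlt
           have h2 : P (y t) (y t) < P (y (t+1)) (y (t+1)) := by
             rw [hstep t, if_pos hs']
             exact key _ _ hs'
           rw [show y (s+1) = y (t+1) from heq] at h1
           linarith)
        | (have hs' : 0 < Δ (x s) (y s) := (Finset.mem_filter.mp hs).2
           have h1 : P (y (t+1)) (y (t+1)) ≤ P (y s) (y s) := hmono _ _ hlt
           have h2 : P (y s) (y s) < P (y (s+1)) (y (s+1)) := by
             rw [hstep s, if_pos hs']
             exact key _ _ hs'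
           rw [show y (s+1) = y (t+1) from heq] at h2
           linarith)
      }
    calc S.card ≤ (Finset.univ : Finset X).card :=
          Finset.card_le_card_of_injOn (fun t => y (t + 1)) (fun _ _ => Finset.mem_univ _) hinj
      _ = Fintype.card X := rfl
  have hsplit : ∑ t ∈ Finset.range (T + 1), Δ (x t) (y t) ≤ ∑ t ∈ S, Δ (x t) (y t) := by
    have hneg : ∑ t ∈ (Finset.range (T + 1)).filter (fun t => ¬ 0 < Δ (x t) (y t)),
        Δ (x t) (y t) ≤ 0 :=
      Finset.sum_nonpos (fun t ht => le_of_not_gt (Finset.mem_filter.mp ht).2)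
    have := Finset.sum_filter_add_sum_filter_not (Finset.range (T + 1))
      (fun t => 0 < Δ (x t) (y t)) (fun t => Δ (x t) (y t))
    rw [← hS] at this
    linarith
  have hSsum : ∑ t ∈ S, Δ (x t) (y t) ≤ (S.card : ℝ) * C := by
    have := Finset.sum_le_card_nsmul S (fun t => Δ (x t) (y t)) C (fun t _ => hCle _ _)
    simpa [nsmul_eq_mul] using this
  have hfinal : (S.card : ℝ) * C ≤ (Fintype.card X : ℝ) * C := by
    apply mul_le_mul_of_nonneg_right _ hC0
    exact_mod_cast hcardS
  calc ∑ t ∈ Finset.range (T + 1), Δ (x t) (y t) ≤ ∑ t ∈ S, Δ (x t) (y t) := hsplit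
    _ ≤ (S.card : ℝ) * C := hSsum
    _ ≤ (Fintype.card X : ℝ) * C := hfinal
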